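/- Let N ≥ 1, let Δ = diag(δ₁,…,δ_N) with δᵢ > 0 for all i, and let σ₁ > σ₂ ≥ 0. Let u₁, v₁ ∈ ℝᴺ be unit vectors (‖u₁‖₂ = ‖v₁‖₂ = 1) such that every entry of v₁ is positive and every entry of u₁ is nonzero, and let E ∈ ℝ^{N×N} with spectral norm ‖E‖₂ ≤ σ₂. Define ρ := (minᵢ δᵢ·v_{1,i}/|u_{1,i}|)/(maxᵢ v_{1,i}/|u_{1,i}|). If σ₂ < ρ·(1 − σ₁·∑_{i=1}^{N} (1/δᵢ)·[u_{1,i} v_{1,i}]₊), then the matrix A = −Δ + σ₁·u₁v₁ᵀ + E is diagonally stable, with certificate D = diag(v_{1,i}/|u_{1,i}|). -/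

import Mathlib

open Matrix

/-- A real square matrix `A` is *diagonally stable* if there exists a diagonal matrix `D`
with positive diagonal entries such that `Aᵀ D + D A` is negative definite. -/
def DiagonallyStable {n : Type*} [Fintype n] [DecidableEq n] (A : Matrix n n ℝ) : Prop :=
  ∃ d : n → ℝ, (∀ i, 0 < d i) ∧
    (-(Aᵀ * Matrix.diagonal d + Matrix.diagonal d * A)).PosDef

open scoped Matrix.Norms.L2Operator

set_option maxHeartbeats 1600000 in
/-- diagonal stability of a diagonal matrix plus an interconnection with a
strictly dominant rank-1 part `σ₁ u₁ v₁ᵀ` and remainder `E` with `‖E‖₂ ≤ σ₂`. -/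
theorem dominant_rank1_diagonallyStable (N : ℕ) (hN : 1 ≤ N) (δ u v : Fin N → ℝ)
    (hδ : ∀ i, 0 < δ i) (σ₁ σ₂ : ℝ) (hσ : σ₁ > σ₂) (hσ₂ : 0 ≤ σ₂)
    (hu_unit : Real.sqrt (∑ i, u i ^ 2) = 1) (hv_unit : Real.sqrt (∑ i, v i ^ 2) = 1)
    (hv : ∀ i, 0 < v i) (hu : ∀ i, u i ≠ 0)
    (E : Matrix (Fin N) (Fin N) ℝ) (hE : ‖E‖ ≤ σ₂)
    (ρ : ℝ)
    (hρ : ρ = Finset.univ.inf' (Finset.univ_nonempty_iff.mpr ⟨⟨0, hN⟩⟩)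
            (fun i => δ i * (v i / |u i|)) /
          Finset.univ.sup' (Finset.univ_nonempty_iff.mpr ⟨⟨0, hN⟩⟩) (fun i => v i / |u i|))
    (hcond : σ₂ < ρ * (1 - σ₁ * ∑ i, (1 / δ i) * max (u i * v i) 0))
    (A D : Matrix (Fin N) (Fin N) ℝ)
    (hA : A = -(Matrix.diagonal δ) + σ₁ • Matrix.vecMulVec u v + E)
    (hD : D = Matrix.diagonal (fun i => v i / |u i|)) :
    (∀ i, 0 < v i / |u i|) ∧ (-(Aᵀ * D + D * A)).PosDef := by
  have ne : (Finset.univ : Finset (Fin N)).Nonempty := Finset.univ_nonempty_iff.mpr ⟨⟨0, hN⟩⟩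
  set d : Fin N → ℝ := fun i => v i / |u i| with hd
  have hdpos : ∀ i, 0 < d i := fun i => div_pos (hv i) (abs_pos.mpr (hu i))
  refine ⟨hdpos, Matrix.PosDef.of_dotProduct_mulVec_pos ?_ ?_⟩
  · -- Hermitian
    have hDT : Dᵀ = D := by rw [hD]; exact Matrix.diagonal_transpose _
    show _ = _
    simp only [Matrix.conjTranspose_eq_transpose_of_trivial, Matrix.transpose_neg,
      Matrix.transpose_add, Matrix.transpose_mul, Matrix.transpose_transpose, hDT]
    rw [add_comm]
  · -- positivity of quadratic form
    intro x hx
    -- notation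
    set s : ℝ := ∑ i, (1 / δ i) * max (u i * v i) 0 with hs_def
    set m : ℝ := Finset.univ.inf' ne (fun i => δ i * d i) with hm_def
    set Mx : ℝ := Finset.univ.sup' ne (fun i => d i) with hMx_def
    have hm : 0 < m := (Finset.lt_inf'_iff ne).mpr fun i _ =>
      mul_pos (hδ i) (hdpos i)
    have hMx : 0 < Mx := lt_of_lt_of_le (hdpos ⟨0, hN⟩)
      (Finset.le_sup' _ (Finset.mem_univ _))
    have hs0 : 0 ≤ s := Finset.sum_nonneg fun i _ =>
      mul_nonneg (one_div_nonneg.mpr (hδ i).le) (le_max_right _ _)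
    have hρ' : ρ = m / Mx := hρ
    have hσ₁ : 0 < σ₁ := lt_of_le_of_lt hσ₂ hσ
    have h1s : 0 < 1 - σ₁ * s := by
      by_contra h
      push_neg at h
      have : ρ * (1 - σ₁ * s) ≤ 0 :=
        mul_nonpos_of_nonneg_of_nonpos (by rw [hρ']; exact (div_pos hm hMx).le) h
      linarith
    have hkey : σ₂ * Mx < m * (1 - σ₁ * s) := by
      rw [hρ', div_mul_eq_mul_div, lt_div_iff₀ hMx] at hcond
      linarith
    -- quadratic form identity
    have quad : x ⬝ᵥ (-(Aᵀ * D + D * A)) *ᵥ x =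
        2 * (∑ i, δ i * d i * x i ^ 2)
        - 2 * (σ₁ * ((∑ i, d i * u i * x i) * (∑ i, v i * x i)))
        - 2 * (∑ i, d i * x i * (E *ᵥ x) i) := by
      have hvmv : ∀ i, (Matrix.vecMulVec u v *ᵥ x) i = u i * ∑ j, v j * x j := by
        intro i
        simp [Matrix.mulVec, Matrix.vecMulVec_apply, dotProduct, Finset.mul_sum, mul_assoc]
      have hAx : ∀ i, (A *ᵥ x) i = -(δ i * x i) + σ₁ * u i * (∑ j, v j * x j)
          + (E *ᵥ x) i := by
        intro i
        rw [hA]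
        simp only [Matrix.add_mulVec, Matrix.neg_mulVec, Matrix.smul_mulVec, Pi.add_apply,
          Pi.neg_apply, Pi.smul_apply, Matrix.mulVec_diagonal, smul_eq_mul, hvmv]
        ring
      have key : x ⬝ᵥ (-(Aᵀ * D + D * A)) *ᵥ x = -(2 * ∑ i, d i * x i * (A *ᵥ x) i) := by
        rw [Matrix.neg_mulVec, dotProduct_neg, Matrix.add_mulVec, dotProduct_add]
        rw [← Matrix.mulVec_mulVec, ← Matrix.mulVec_mulVec]
        rw [Matrix.dotProduct_mulVec x Aᵀ, Matrix.vecMul_transpose]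
        rw [hD]
        simp only [dotProduct, Matrix.mulVec_diagonal]
        rw [Finset.mul_sum, ← Finset.sum_add_distrib]
        congr 1
        exact Finset.sum_congr rfl fun i _ => by ring
      rw [key]
      have step : ∑ i, d i * x i * (A *ᵥ x) i
          = -(∑ i, δ i * d i * x i ^ 2) + σ₁ * ((∑ i, d i * u i * x i) * (∑ i, v i * x i))
            + ∑ i, d i * x i * (E *ᵥ x) i := by
        have e1 : ∀ i, d i * x i * (A *ᵥ x) i
            = -(δ i * d i * x i ^ 2) + (d i * u i * x i) * (σ₁ * ∑ j, v j * x j)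
              + d i * x i * (E *ᵥ x) i := fun i => by rw [hAx i]; ring
        rw [Finset.sum_congr rfl fun i _ => e1 i, Finset.sum_add_distrib, Finset.sum_add_distrib,
          Finset.sum_neg_distrib, ← Finset.sum_mul]
        ring
      rw [step]; ring
    -- scalar quantities
    set X : ℝ := ∑ i, x i ^ 2 with hX_def
    have hX : 0 < X := by
      obtain ⟨i₀, hi₀⟩ := Function.ne_iff.mp hx
      exact Finset.sum_pos' (fun i _ => sq_nonneg _)
        ⟨i₀, Finset.mem_univ _, by rw [← sq_abs]; exact pow_pos (abs_pos.mpr hi₀) 2⟩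
    set T1 : ℝ := ∑ i, δ i * d i * x i ^ 2 with hT1_def
    have hT1 : m * X ≤ T1 := by
      rw [hX_def, Finset.mul_sum]
      exact Finset.sum_le_sum fun i _ =>
        mul_le_mul_of_nonneg_right (Finset.inf'_le _ (Finset.mem_univ i)) (sq_nonneg _)
    have hT1nn : 0 ≤ T1 := le_trans (by positivity) hT1
    -- rank-one bound
    set f : Fin N → ℝ := fun i => if 0 < u i then v i else 0 with hf_def
    set g : Fin N → ℝ := fun i => if 0 < u i then 0 else v i with hg_def
    have hfg1 : ∀ i, d i * u i = f i - g i := by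
      intro i
      have hdi : d i = v i / |u i| := rfl
      have hfi : f i = if 0 < u i then v i else 0 := rfl
      have hgi : g i = if 0 < u i then 0 else v i := rfl
      rcases (hu i).lt_or_gt with h | h
      · rw [hdi, hfi, hgi, if_neg (not_lt.mpr h.le), if_neg (not_lt.mpr h.le),
          abs_of_neg h, zero_sub, div_neg, neg_mul, div_mul_cancel₀ _ (hu i)]
      · rw [hdi, hfi, hgi, if_pos h, if_pos h, abs_of_pos h, sub_zero,
          div_mul_cancel₀ _ (hu i)]
    have hfg2 : ∀ i, v i = f i + g i := by
      intro i
      simp only [hf_def, hg_def]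
      split <;> ring
    have ha : (∑ i, d i * u i * x i) = (∑ i, f i * x i) - (∑ i, g i * x i) := by
      rw [← Finset.sum_sub_distrib]
      exact Finset.sum_congr rfl fun i _ => by rw [hfg1 i]; ring
    have hb : (∑ i, v i * x i) = (∑ i, f i * x i) + (∑ i, g i * x i) := by
      rw [← Finset.sum_add_distrib]
      exact Finset.sum_congr rfl fun i _ => by rw [hfg2 i]; ring
    have hF2 : (∑ i, f i * x i) ^ 2 ≤ s * T1 := by
      have hCS := Finset.sum_mul_sq_le_sq_mul_sq Finset.univ
        (fun i => f i / Real.sqrt (δ i * d i)) (fun i => Real.sqrt (δ i * d i) * x i)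
      have e2 : ∀ i, (f i / Real.sqrt (δ i * d i)) * (Real.sqrt (δ i * d i) * x i)
          = f i * x i := by
        intro i
        have hw : (0:ℝ) < Real.sqrt (δ i * d i) :=
          Real.sqrt_pos.mpr (mul_pos (hδ i) (hdpos i))
        field_simp
      have e3 : ∀ i, (f i / Real.sqrt (δ i * d i)) ^ 2 = (1 / δ i) * max (u i * v i) 0 := by
        intro i
        have hw : 0 < δ i * d i := mul_pos (hδ i) (hdpos i)
        have hdi : d i = v i / |u i| := rfl
        have hfi : f i = if 0 < u i then v i else 0 := rfl
        rw [div_pow, Real.sq_sqrt hw.le]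
        rcases (hu i).lt_or_gt with h | h
        · rw [hfi, if_neg (not_lt.mpr h.le),
            max_eq_right (mul_nonpos_of_nonpos_of_nonneg h.le (hv i).le)]
          simp
        · rw [hfi, if_pos h, max_eq_left (mul_nonneg h.le (hv i).le), hdi, abs_of_pos h]
          have hvne : v i ≠ 0 := (hv i).ne'
          have hδne : δ i ≠ 0 := (hδ i).ne'
          field_simp
      have e4 : ∀ i, (Real.sqrt (δ i * d i) * x i) ^ 2 = δ i * d i * x i ^ 2 := by
        intro i
        have hw : 0 ≤ δ i * d i := (mul_pos (hδ i) (hdpos i)).le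
        rw [mul_pow, Real.sq_sqrt hw]
      calc (∑ i, f i * x i) ^ 2
          = (∑ i, (f i / Real.sqrt (δ i * d i)) * (Real.sqrt (δ i * d i) * x i)) ^ 2 := by
            rw [Finset.sum_congr rfl fun i _ => (e2 i).symm]
        _ ≤ (∑ i, (f i / Real.sqrt (δ i * d i)) ^ 2)
            * (∑ i, (Real.sqrt (δ i * d i) * x i) ^ 2) := hCS
        _ = s * T1 := by
            rw [Finset.sum_congr rfl fun i _ => e3 i, Finset.sum_congr rfl fun i _ => e4 i]
    have hrank : (∑ i, d i * u i * x i) * (∑ i, v i * x i) ≤ s * T1 := by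
      rw [ha, hb]
      nlinarith [sq_nonneg (∑ i, g i * x i), hF2]
    -- E bound
    set R : ℝ := ∑ i, d i * x i * (E *ᵥ x) i with hR_def
    have hEx : ∑ i, ((E *ᵥ x) i) ^ 2 ≤ σ₂ ^ 2 * X := by
      have h := E.l2_opNorm_mulVec (WithLp.toLp 2 x)
      simp only [EuclideanSpace.norm_eq, Real.norm_eq_abs, sq_abs] at h
      have hS : (0:ℝ) ≤ ∑ i, ((E *ᵥ x) i) ^ 2 := Finset.sum_nonneg fun i _ => sq_nonneg _
      have h2 : Real.sqrt (∑ i, ((E *ᵥ x) i) ^ 2) ≤ σ₂ * Real.sqrt X :=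
        h.trans (mul_le_mul_of_nonneg_right hE (Real.sqrt_nonneg _))
      have h3 := mul_self_le_mul_self (Real.sqrt_nonneg _) h2
      rw [Real.mul_self_sqrt hS] at h3
      calc ∑ i, ((E *ᵥ x) i) ^ 2 ≤ (σ₂ * Real.sqrt X) * (σ₂ * Real.sqrt X) := h3
        _ = σ₂ ^ 2 * X := by rw [mul_mul_mul_comm, Real.mul_self_sqrt hX.le]; ring
    have hDx : ∑ i, (d i * x i) ^ 2 ≤ Mx ^ 2 * X := by
      rw [hX_def, Finset.mul_sum]
      refine Finset.sum_le_sum fun i _ => ?_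
      rw [mul_pow]
      exact mul_le_mul_of_nonneg_right
        (pow_le_pow_left₀ (hdpos i).le (Finset.le_sup' _ (Finset.mem_univ i)) 2) (sq_nonneg _)
    have hRsq : R ^ 2 ≤ (σ₂ * Mx * X) ^ 2 := by
      have hCS := Finset.sum_mul_sq_le_sq_mul_sq Finset.univ
        (fun i => d i * x i) (fun i => (E *ᵥ x) i)
      have : R ^ 2 ≤ (∑ i, (d i * x i) ^ 2) * (∑ i, ((E *ᵥ x) i) ^ 2) := hCS
      calc R ^ 2 ≤ (∑ i, (d i * x i) ^ 2) * (∑ i, ((E *ᵥ x) i) ^ 2) := this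
        _ ≤ (Mx ^ 2 * X) * (σ₂ ^ 2 * X) := by
            refine mul_le_mul hDx hEx (Finset.sum_nonneg fun i _ => sq_nonneg _) (mul_nonneg (sq_nonneg Mx) hX.le)
        _ = (σ₂ * Mx * X) ^ 2 := by ring
    have hR : R ≤ σ₂ * Mx * X := by nlinarith [hRsq, mul_nonneg (mul_nonneg hσ₂ hMx.le) hX.le]
    -- conclude
    have star_eq : star x = x := by simp
    rw [star_eq, quad]
    have h5 : σ₁ * ((∑ i, d i * u i * x i) * (∑ i, v i * x i)) ≤ σ₁ * (s * T1) :=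
      mul_le_mul_of_nonneg_left hrank hσ₁.le
    nlinarith [mul_le_mul_of_nonneg_right hT1 h1s.le, mul_lt_mul_of_pos_right hkey hX, h5, hR]
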